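/- Let A be a linear endomorphism of a finite-dimensional vector space V over a field F whose minimal polynomial factors as m_A = p₁^{k₁} ⋯ p_r^{k_r} with p₁, …, p_r pairwise distinct irreducible polynomials, and set V_i = ker(p_i(A)^{k_i}), with restriction A_i = A|V_i. Then a subspace Y of V is hyperinvariant for A if and only if Y = (Y ∩ V₁) ⊕ ⋯ ⊕ (Y ∩ V_r) and, for each i, the subspace Y ∩ V_i of V_i is hyperinvariant for A_i. -/

import Mathlib

/-- A subspace `Y` is hyperinvariant for `A` if `B Y ⊆ Y` for every endomorphism `B`
commuting with `A`. -/
def HyperinvariantSubspace {F V : Type*} [Field F] [AddCommGroup V] [Module F V]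
    (A : Module.End F V) (Y : Submodule F V) : Prop :=
  ∀ B : Module.End F V, Commute B A → ∀ x ∈ Y, B x ∈ Y

/-- The kernel of `q(A) ^ m` is invariant under `A`. -/
theorem aeval_pow_ker_invariant {F V : Type*} [Field F] [AddCommGroup V] [Module F V]
    (A : Module.End F V) (q : Polynomial F) (m : ℕ) :
    ∀ x ∈ LinearMap.ker (Polynomial.aeval A q ^ m),
      A x ∈ LinearMap.ker (Polynomial.aeval A q ^ m) := by
  intro x hx
  rw [LinearMap.mem_ker] at hx ⊢
  have hc : Commute A (Polynomial.aeval A q) := by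
    have h := (Commute.all Polynomial.X q).map (Polynomial.aeval A).toRingHom
    simpa using h
  have hc' := (hc.pow_right m).symm
  calc (Polynomial.aeval A q ^ m) (A x) = ((Polynomial.aeval A q ^ m) * A) x := rfl
    _ = (A * (Polynomial.aeval A q ^ m)) x := by rw [hc']
    _ = A ((Polynomial.aeval A q ^ m) x) := rfl
    _ = 0 := by rw [hx]; simp

/-- Any endomorphism commuting with `A` commutes with every polynomial in `A`. -/
lemma commute_aeval_of_commute {F V : Type*} [Field F] [AddCommGroup V] [Module F V]
    (A B : Module.End F V) (h : Commute B A) (q : Polynomial F) :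
    Commute B (Polynomial.aeval A q) := by
  induction q using Polynomial.induction_on' with
  | add p q hp hq => simpa [map_add] using hp.add_right hq
  | monomial n c =>
      rw [Polynomial.aeval_monomial]
      exact (Algebra.commute_algebraMap_right c B).mul_right (h.pow_right n)

/-- If `a ∣ b` then `ker (a(A)) ≤ ker (b(A))`. -/
lemma ker_aeval_mono {F V : Type*} [Field F] [AddCommGroup V] [Module F V]
    (A : Module.End F V) {a b : Polynomial F} (h : a ∣ b) :
    LinearMap.ker (Polynomial.aeval A a) ≤ LinearMap.ker (Polynomial.aeval A b) := by
  obtain ⟨c, rfl⟩ := h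
  intro x hx
  rw [LinearMap.mem_ker] at hx ⊢
  rw [mul_comm, map_mul]
  show Polynomial.aeval A c (Polynomial.aeval A a x) = 0
  rw [hx, map_zero]

/-- With the primary decomposition `Vᵢ = ker (pᵢ(A) ^ kᵢ)` and restrictions
`Aᵢ = A | Vᵢ`, a subspace `Y` is hyperinvariant for `A` iff `Y` is the internal direct sum
of the `Y ⊓ Vᵢ` and each `Y ⊓ Vᵢ`, viewed inside `Vᵢ`, is hyperinvariant for `Aᵢ`. -/
theorem hyperinvariant_iff_primary_decomposition
    {F V : Type*} [Field F] [AddCommGroup V] [Module F V] [FiniteDimensional F V]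
    (A : Module.End F V) {n : ℕ} (p : Fin n → Polynomial F) (k : Fin n → ℕ)
    (hirr : ∀ i, Irreducible (p i)) (hmonic : ∀ i, (p i).Monic) (hk : ∀ i, 0 < k i)
    (hdist : Function.Injective p)
    (hmin : minpoly F A = ∏ i, p i ^ k i)
    (Y : Submodule F V) :
    HyperinvariantSubspace A Y ↔
      (Y = ⨆ i, Y ⊓ LinearMap.ker (Polynomial.aeval A (p i) ^ k i)) ∧
      iSupIndep (fun i => Y ⊓ LinearMap.ker (Polynomial.aeval A (p i) ^ k i)) ∧
      ∀ i, HyperinvariantSubspace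
        (A.restrict (aeval_pow_ker_invariant A (p i) (k i)))
        (Y.comap (LinearMap.ker (Polynomial.aeval A (p i) ^ k i)).subtype) := by
  classical
  set P : Fin n → Polynomial F := fun i => p i ^ k i with hP
  have hKP : ∀ i, LinearMap.ker (Polynomial.aeval A (p i) ^ k i)
      = LinearMap.ker (Polynomial.aeval A (P i)) := by
    intro i; rw [hP]; simp [map_pow]
  -- pairwise coprimality
  have hcop : ∀ i j, i ≠ j → IsCoprime (P i) (P j) := by
    intro i j hij
    refine IsCoprime.pow ?_
    rw [(hirr i).coprime_iff_not_dvd]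
    intro hdvd
    exact hij (hdist (Polynomial.eq_of_monic_of_associated (hmonic i) (hmonic j)
      ((hirr i).associated_of_dvd (hirr j) hdvd)))
  set q : Fin n → Polynomial F := fun i => ∏ j ∈ Finset.univ.erase i, P j with hq
  have hPq : ∀ i, IsCoprime (P i) (q i) := fun i =>
    IsCoprime.prod_right fun j hj => hcop i j (Finset.ne_of_mem_erase hj).symm
  choose a b hab using hPq
  have hPqprod : ∀ i, P i * q i = ∏ j, P j := fun i =>
    Finset.mul_prod_erase _ _ (Finset.mem_univ i)
  have hmin0 : Polynomial.aeval A (∏ j, P j) = 0 := by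
    rw [← hmin]; exact minpoly.aeval F A
  -- the projections onto the primary components, as polynomials in `A`
  set π : Fin n → Module.End F V := fun i => Polynomial.aeval A (b i * q i) with hπ
  have hπK : ∀ i x, π i x ∈ LinearMap.ker (Polynomial.aeval A (p i) ^ k i) := by
    intro i x
    rw [hKP, LinearMap.mem_ker]
    have h0 : Polynomial.aeval A (P i * (b i * q i)) x = 0 := by
      rw [show P i * (b i * q i) = b i * (P i * q i) by ring, hPqprod, map_mul, hmin0]
      simp
    rw [map_mul] at h0
    exact h0
  have hπfix : ∀ i, ∀ x ∈ LinearMap.ker (Polynomial.aeval A (p i) ^ k i), π i x = x := by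
    intro i x hx
    rw [hKP, LinearMap.mem_ker] at hx
    have h1 : Polynomial.aeval A (a i * P i + b i * q i) x = x := by
      rw [hab i]; simp
    rw [map_add, map_mul, map_mul, LinearMap.add_apply, Module.End.mul_apply,
        Module.End.mul_apply, hx, map_zero, zero_add] at h1
    simp only [hπ, map_mul, Module.End.mul_apply]
    exact h1
  have hsum : ∀ x : V, (∑ i, π i x) = x := by
    intro x
    have hr : (∏ j, P j) ∣ (1 - ∑ i, b i * q i) := by
      apply Finset.prod_dvd_of_coprime
      · intro i _ j _ hij; exact hcop i j hij
      · intro i _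
        have hs : (∑ j, b j * q j)
            = b i * q i + ∑ j ∈ Finset.univ.erase i, b j * q j :=
          (Finset.add_sum_erase _ _ (Finset.mem_univ i)).symm
        rw [hs, ← hab i,
          show a i * P i + b i * q i - (b i * q i + ∑ j ∈ Finset.univ.erase i, b j * q j)
            = a i * P i - ∑ j ∈ Finset.univ.erase i, b j * q j by ring]
        refine dvd_sub (dvd_mul_left _ _) (Finset.dvd_sum fun j hj => ?_)
        exact dvd_mul_of_dvd_right
          (Finset.dvd_prod_of_mem _
            (Finset.mem_erase.mpr ⟨(Finset.ne_of_mem_erase hj).symm, Finset.mem_univ _⟩)) _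
    obtain ⟨c, hc⟩ := hr
    have h0x : Polynomial.aeval A (1 - ∑ i, b i * q i) x = 0 := by
      rw [hc, map_mul, hmin0, zero_mul]; simp
    rw [map_sub, map_one, map_sum, LinearMap.sub_apply, Module.End.one_apply,
      LinearMap.sum_apply, sub_eq_zero] at h0x
    exact h0x.symm
  have hπA : ∀ i, Commute (π i) A :=
    fun i => (commute_aeval_of_commute A A (Commute.refl A) (b i * q i)).symm
  constructor
  · intro hY
    refine ⟨?_, ?_, ?_⟩
    · apply le_antisymm
      · intro y hy
        have hy' : y = ∑ i, π i y := (hsum y).symm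
        rw [hy']
        refine Submodule.sum_mem _ fun i _ => ?_
        exact Submodule.mem_iSup_of_mem i ⟨hY (π i) (hπA i) y hy, hπK i y⟩
      · exact iSup_le fun i => inf_le_left
    · intro i
      have hdisj : Disjoint (LinearMap.ker (Polynomial.aeval A (P i)))
          (LinearMap.ker (Polynomial.aeval A (q i))) :=
        Polynomial.disjoint_ker_aeval_of_isCoprime A ⟨a i, b i, hab i⟩
      refine hdisj.mono (by rw [← hKP]; exact inf_le_right) ?_
      refine iSup_le fun j => iSup_le fun hji => le_trans inf_le_right ?_
      rw [hKP]
      exact ker_aeval_mono A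
        (Finset.dvd_prod_of_mem _ (Finset.mem_erase.mpr ⟨hji, Finset.mem_univ _⟩))
    · intro i B' hB' x hx
      set ι := (LinearMap.ker (Polynomial.aeval A (p i) ^ k i)).subtype with hι
      set πr : V →ₗ[F] ↥(LinearMap.ker (Polynomial.aeval A (p i) ^ k i)) :=
        (π i).codRestrict _ (fun y => hπK i y) with hπr
      set Ai := A.restrict (aeval_pow_ker_invariant A (p i) (k i)) with hAi
      set B : Module.End F V := ι ∘ₗ (B' : Module.End F ↥(LinearMap.ker (Polynomial.aeval A (p i) ^ k i))) ∘ₗ πr with hBdef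
      have hcomm : Commute B A := by
        apply LinearMap.ext; intro y
        show B (A y) = A (B y)
        have h1 : πr (A y) = Ai (πr y) := by
          apply Subtype.ext
          show π i (A y) = A (π i y)
          exact LinearMap.congr_fun (hπA i) y
        calc B (A y) = ι (B' (πr (A y))) := rfl
          _ = ι (B' (Ai (πr y))) := by rw [h1]
          _ = ι (Ai (B' (πr y))) := by rw [← Module.End.mul_apply, ← Module.End.mul_apply, hB']
          _ = A (ι (B' (πr y))) :=
              LinearMap.restrict_coe_apply A (aeval_pow_ker_invariant A (p i) (k i)) (B' (πr y))
          _ = A (B y) := rfl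
      have hBx : B ↑x ∈ Y := hY B hcomm ↑x hx
      have hfix : πr (↑x : V) = x := Subtype.ext (hπfix i ↑x x.2)
      have hBeq : B ↑x = ι (B' x) := by
        show ι (B' (πr ↑x)) = ι (B' x)
        rw [hfix]
      rw [Submodule.mem_comap]
      rw [← hBeq]
      exact hBx
  · rintro ⟨hYsup, -, hHyp⟩
    intro B hBA y hy
    rw [hYsup] at hy
    refine Submodule.iSup_induction (motive := fun z => B z ∈ Y) _ hy (fun i z hz => ?_) (by simp) (fun u v hu hv => ?_)
    · -- z ∈ Y ⊓ ker, show B z ∈ Y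
      have hBinv : ∀ v ∈ LinearMap.ker (Polynomial.aeval A (p i) ^ k i),
          B v ∈ LinearMap.ker (Polynomial.aeval A (p i) ^ k i) := by
        intro v hv
        rw [LinearMap.mem_ker] at hv ⊢
        have hcB : Commute B (Polynomial.aeval A (p i) ^ k i) :=
          (commute_aeval_of_commute A B hBA (p i)).pow_right (k i)
        calc (Polynomial.aeval A (p i) ^ k i) (B v)
            = ((Polynomial.aeval A (p i) ^ k i) * B) v := rfl
          _ = (B * (Polynomial.aeval A (p i) ^ k i)) v := by rw [← hcB]
          _ = B ((Polynomial.aeval A (p i) ^ k i) v) := rfl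
          _ = 0 := by rw [hv, map_zero]
      set Bi := B.restrict hBinv with hBi
      have hcomm : Commute Bi (A.restrict (aeval_pow_ker_invariant A (p i) (k i))) := by
        apply LinearMap.ext; intro w
        apply Subtype.ext
        show (↑((Bi * A.restrict (aeval_pow_ker_invariant A (p i) (k i))) w) : V)
            = ↑((A.restrict (aeval_pow_ker_invariant A (p i) (k i)) * Bi) w)
        rw [Module.End.mul_apply, Module.End.mul_apply, LinearMap.restrict_coe_apply,
          LinearMap.restrict_coe_apply, LinearMap.restrict_coe_apply,
          LinearMap.restrict_coe_apply]
        exact LinearMap.congr_fun hBA ↑w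
      have hmem : (⟨z, hz.2⟩ : ↥(LinearMap.ker (Polynomial.aeval A (p i) ^ k i)))
          ∈ Y.comap (LinearMap.ker (Polynomial.aeval A (p i) ^ k i)).subtype := hz.1
      have := hHyp i Bi hcomm ⟨z, hz.2⟩ hmem
      rw [Submodule.mem_comap] at this
      have hcoe : (LinearMap.ker (Polynomial.aeval A (p i) ^ k i)).subtype
          (Bi ⟨z, hz.2⟩) = B z := LinearMap.restrict_coe_apply B hBinv ⟨z, hz.2⟩
      rwa [hcoe] at this
    · show B (u + v) ∈ Y
      rw [map_add]; exact Submodule.add_mem _ hu hv
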